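/- With α > β ≥ 0, a, c as above and assuming (c² - aα)² > a²β² and a(α² - β²) > αc², the conditional purity and squeezing parameters defined by det σ_c = 1/(4μ_c²) and tr σ_c = 1/(μ_c μ_sc) are μ_c = (1/2)sqrt((α² - β²)/((c² - aα)² - a²β²)) and μ_sc = sqrt((α² - β²)((c² - aα)² - a²β²))/(a(α² - β²) - αc²). -/

import Mathlib

open Matrix Real

noncomputable section

set_option maxHeartbeats 800000

/-- Conditional covariance matrix of mode A of a TMST after a Gaussian measurement on
mode B, parametrized by `α > β ≥ 0` and phase `φ`. -/
def condCM (a c α β φ : ℝ) : Matrix (Fin 2) (Fin 2) ℝ :=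
  a • (1 : Matrix (Fin 2) (Fin 2) ℝ) -
    (c ^ 2 / (α ^ 2 - β ^ 2)) •
      !![α - β * Real.cos φ, -(β * Real.sin φ);
         -(β * Real.sin φ), α + β * Real.cos φ]

lemma condCM_det (a c α β φ : ℝ) (hS : α ^ 2 - β ^ 2 ≠ 0) :
    (condCM a c α β φ).det = ((c ^ 2 - a * α) ^ 2 - a ^ 2 * β ^ 2) / (α ^ 2 - β ^ 2) := by
  have hsc : Real.sin φ ^ 2 + Real.cos φ ^ 2 = 1 := Real.sin_sq_add_cos_sq φ
  simp only [condCM, Matrix.det_fin_two, Matrix.sub_apply, Matrix.smul_apply,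
    Matrix.one_apply, Matrix.cons_val', Matrix.cons_val_zero, Matrix.cons_val_one,
    Matrix.head_cons, Matrix.head_fin_const, Matrix.empty_val', Matrix.cons_val_fin_one,
    smul_eq_mul, Matrix.of_apply, ↓reduceIte, zero_ne_one, one_ne_zero]
  field_simp
  linear_combination (-(c ^ 4 * β ^ 2 * (α ^ 2 - β ^ 2)) + α ^ 2 * β ^ 2 * c ^ 4 - β ^ 2 * c ^ 4 - β ^ 4 * c ^ 4) * hsc

lemma condCM_trace (a c α β φ : ℝ) (hS : α ^ 2 - β ^ 2 ≠ 0) :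
    (condCM a c α β φ).trace = 2 * (a * (α ^ 2 - β ^ 2) - α * c ^ 2) / (α ^ 2 - β ^ 2) := by
  simp only [condCM, Matrix.trace_fin_two, Matrix.sub_apply, Matrix.smul_apply,
    Matrix.one_apply, Matrix.cons_val', Matrix.cons_val_zero, Matrix.cons_val_one,
    Matrix.head_cons, Matrix.head_fin_const, Matrix.empty_val', Matrix.cons_val_fin_one,
    smul_eq_mul, Matrix.of_apply, ↓reduceIte]
  field_simp
  ring

lemma eq_of_sq_eq_sq_of_pos {x y : ℝ} (hx : 0 < x) (hy : 0 < y) (h : x ^ 2 = y ^ 2) :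
    x = y := by
  have h0 : (x - y) * (x + y) = 0 := by nlinarith
  rcases mul_eq_zero.mp h0 with h1 | h1
  · linarith
  · nlinarith

/-- if the conditional purity `μc > 0` and squeezing `μsc > 0` are defined
by `det σc = 1/(4μc²)` and `tr σc = 1/(μc μsc)`, then, under the stated positivity
conditions, `μc = (1/2)√((α² - β²)/((c² - aα)² - a²β²))` and
`μsc = √((α² - β²)((c² - aα)² - a²β²))/(a(α² - β²) - αc²)`. -/
theorem condCM_purity_squeezing (a c α β φ μc μsc : ℝ)
    (hβ : 0 ≤ β) (hαβ : β < α)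
    (h₁ : a ^ 2 * β ^ 2 < (c ^ 2 - a * α) ^ 2)
    (h₂ : α * c ^ 2 < a * (α ^ 2 - β ^ 2))
    (hμc : 0 < μc) (hμsc : 0 < μsc)
    (hdet : (condCM a c α β φ).det = 1 / (4 * μc ^ 2))
    (htr : (condCM a c α β φ).trace = 1 / (μc * μsc)) :
    μc = (1 / 2) * Real.sqrt ((α ^ 2 - β ^ 2) / ((c ^ 2 - a * α) ^ 2 - a ^ 2 * β ^ 2)) ∧
    μsc = Real.sqrt ((α ^ 2 - β ^ 2) * ((c ^ 2 - a * α) ^ 2 - a ^ 2 * β ^ 2)) /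
        (a * (α ^ 2 - β ^ 2) - α * c ^ 2) := by
  have hS : 0 < α ^ 2 - β ^ 2 := by nlinarith
  have hN : 0 < (c ^ 2 - a * α) ^ 2 - a ^ 2 * β ^ 2 := by linarith
  have hT : 0 < a * (α ^ 2 - β ^ 2) - α * c ^ 2 := by linarith
  have hS' := hS.ne'
  have hN' := hN.ne'
  have hT' := hT.ne'
  rw [condCM_det a c α β φ hS.ne'] at hdet
  rw [condCM_trace a c α β φ hS.ne'] at htr
  -- from the determinant: μc² = S / (4N)
  have hμc2 : μc ^ 2 = (α ^ 2 - β ^ 2) / (4 * ((c ^ 2 - a * α) ^ 2 - a ^ 2 * β ^ 2)) := by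
    rw [div_eq_div_iff hS.ne' (by positivity)] at hdet
    rw [eq_div_iff (by positivity)]
    nlinarith [hdet]
  have hμceq : μc = (1 / 2) * Real.sqrt ((α ^ 2 - β ^ 2) / ((c ^ 2 - a * α) ^ 2 - a ^ 2 * β ^ 2)) := by
    apply eq_of_sq_eq_sq_of_pos hμc
    · have h0 : 0 < (α ^ 2 - β ^ 2) / ((c ^ 2 - a * α) ^ 2 - a ^ 2 * β ^ 2) := by positivity
      have h1 := Real.sqrt_pos.mpr h0
      positivity
    · rw [hμc2, mul_pow, Real.sq_sqrt
        (by positivity : (0:ℝ) ≤ (α ^ 2 - β ^ 2) / ((c ^ 2 - a * α) ^ 2 - a ^ 2 * β ^ 2))]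
      field_simp
      norm_num
  refine ⟨hμceq, ?_⟩
  -- from the trace
  have h1 : μc * μsc * (2 * (a * (α ^ 2 - β ^ 2) - α * c ^ 2)) = α ^ 2 - β ^ 2 := by
    rw [div_eq_div_iff hS.ne' (by positivity)] at htr
    nlinarith [htr]
  have hμsc2 : μsc ^ 2 = ((c ^ 2 - a * α) ^ 2 - a ^ 2 * β ^ 2) * (α ^ 2 - β ^ 2) /
      (a * (α ^ 2 - β ^ 2) - α * c ^ 2) ^ 2 := by
    have h3 : μc ^ 2 * μsc ^ 2 * (4 * (a * (α ^ 2 - β ^ 2) - α * c ^ 2) ^ 2)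
        = (α ^ 2 - β ^ 2) ^ 2 := by nlinarith [h1]
    rw [hμc2] at h3
    rw [eq_div_iff (by positivity)]
    field_simp at h3
    rw [div_eq_iff (ne_of_gt (by linarith [hN]))] at h3
    nlinarith [h3, sq_nonneg (α ^ 2 - β ^ 2), hS]
  apply eq_of_sq_eq_sq_of_pos hμsc
  · have h0 : 0 < (α ^ 2 - β ^ 2) * ((c ^ 2 - a * α) ^ 2 - a ^ 2 * β ^ 2) := by positivity
    have h1 := Real.sqrt_pos.mpr h0
    positivity
  · rw [hμsc2, div_pow, Real.sq_sqrt
      (by positivity : (0:ℝ) ≤ (α ^ 2 - β ^ 2) * ((c ^ 2 - a * α) ^ 2 - a ^ 2 * β ^ 2))]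
    field_simp
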